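/- In the forcing P whose conditions are pairs (M, f) with M a finite ∈-increasing sequence of countable elementary substructures of H(ω₁) and f assigning to each non-top model a finite subset of the next model (ordered by coordinatewise extension), any two conditions p, q such that the models of p form an initial segment of the models of q below some model N ∈ M_q, with p ∈ N, have a common extension, namely s with M_s = M_p ∪ M_q, f_s extending f_p on M_p and f_q on M_q \ M_p. -/

import Mathlib

/-- In an `∈`-chain of models from `S`, earlier models are elements of later ones. -/
lemma chain_trans_mem (S : Set ZFSet)
    (hStrans : ∀ A B : ZFSet, A ∈ S → B ∈ S → A ∈ B → A.toSet ⊆ B.toSet)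
    (L : List ZFSet) (hS : ∀ A ∈ L, A ∈ S) (hc : L.Chain' (fun A B => A ∈ B)) :
    ∀ i j : ℕ, (hij : i < j) → (hj : j < L.length) →
      L[i]'(lt_trans hij hj) ∈ L[j] := by
  intro i j hij hj
  induction j, hij using Nat.le_induction with
  | base =>
    have := List.isChain_iff_getElem.mp hc i (by omega)
    simpa [List.get_eq_getElem] using this
  | succ k hk ih =>
    have h1 : L[i]'(by omega) ∈ L[k]'(by omega) := ih (by omega)
    have h2 : L[k]'(by omega) ∈ L[k+1] := by
      have := List.isChain_iff_getElem.mp hc k (by omega)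
      simpa [List.get_eq_getElem] using this
    exact hStrans _ _ (hS _ (List.getElem_mem _)) (hS _ (List.getElem_mem _)) h2 h1

/-- A condition of the finite-condition club-adding forcing: a finite `∈`-increasing
sequence of models from the class `S` (the countable elementary substructures of
`H(ω₁)`), together with a function assigning to each model a finite set which, for a
non-top model, is a subset of the next model. -/
structure Cond (S : Set ZFSet) where
  M : List ZFSet
  f : ZFSet → Set ZFSet
  hS : ∀ A ∈ M, A ∈ S
  hchain : M.Chain' (fun A B => A ∈ B)
  hfin : ∀ A ∈ M, (f A).Finite
  hnext : ∀ i : ℕ, (h : i + 1 < M.length) →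
    f (M.get ⟨i, Nat.lt_of_succ_lt h⟩) ⊆ (M.get ⟨i + 1, h⟩).toSet

/-- The extension order: `q ≤ p` iff every model of `p` is a model of `q` and `f_q`
extends `f_p` on the models of `p`. -/
def Cond.Le {S : Set ZFSet} (q p : Cond S) : Prop :=
  (∀ A ∈ p.M, A ∈ q.M) ∧ ∀ A ∈ p.M, p.f A ⊆ q.f A


/-- Amalgamation for the finite-condition forcing: suppose the models in `S` are
countable elementary substructures of `H(ω₁)`, so membership implies inclusion among
them. Let `q` be a condition, `N` a model of `q` such that the models of `q` lying in
`N` are exactly those appearing before `N`, and let `r` be a condition all of whose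
models and assigned values lie in `N`, extending the restriction of `q` to `N`.
Then there is a common extension `s` of `r` and `q` whose models are exactly those of
`r` together with those of `q`, with `f_s = f_r` on the models of `r` and `f_s = f_q`
on the models of `q` not among those of `r`. -/
theorem stmt_16 (S : Set ZFSet)
    (hStrans : ∀ A B : ZFSet, A ∈ S → B ∈ S → A ∈ B → A.toSet ⊆ B.toSet)
    (q r : Cond S) (N : ZFSet) (hN : N ∈ q.M)
    (hinit : ∀ A ∈ q.M, (A ∈ N ↔ ∃ i j : Fin q.M.length,
      i < j ∧ q.M.get i = A ∧ q.M.get j = N))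
    (hrN : ∀ A ∈ r.M, A ∈ N)
    (hrvN : ∀ A ∈ r.M, r.f A ⊆ N.toSet)
    (hrq : ∀ A ∈ q.M, A ∈ N → A ∈ r.M)
    (hrqf : ∀ A ∈ q.M, A ∈ N → q.f A ⊆ r.f A) :
    ∃ s : Cond S,
      (∀ A : ZFSet, A ∈ s.M ↔ (A ∈ r.M ∨ A ∈ q.M)) ∧
      (∀ A ∈ r.M, s.f A = r.f A) ∧
      (∀ A ∈ q.M, A ∉ r.M → s.f A = q.f A) ∧
      s.Le r ∧ s.Le q := by
  classical
  obtain ⟨j, hj, hjN⟩ := List.getElem_of_mem hN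
  have hmem_lt : ∀ k, (hkj : k < j) → q.M[k]'(by omega) ∈ N := by
    intro k hkj
    exact hjN ▸ chain_trans_mem S hStrans q.M q.hS q.hchain k j hkj hj
  have hmem_ge : ∀ k, (hk : k < q.M.length) → j ≤ k → q.M[k] ∉ N := by
    intro k hk hjk hmem
    rcases eq_or_lt_of_le hjk with h | h
    · subst h; rw [hjN] at hmem; exact ZFSet.mem_irrefl N hmem
    · exact ZFSet.mem_asymm hmem
        (hjN ▸ chain_trans_mem S hStrans q.M q.hS q.hchain j k h hk)
  have hdrop_not_r : ∀ A ∈ q.M.drop j, A ∉ r.M := by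
    intro A hA hAr
    obtain ⟨k, hk, hAk⟩ := List.getElem_of_mem hA
    have hk' : k < q.M.length - j := by simpa using hk
    rw [List.getElem_drop] at hAk
    exact hmem_ge (j + k) (by omega) (Nat.le_add_right _ _) (hAk ▸ hrN A hAr)
  set m := r.M.length with hm
  refine ⟨⟨r.M ++ q.M.drop j, fun A => if A ∈ r.M then r.f A else q.f A,
      ?_, ?_, ?_, ?_⟩, ?_, ?_, ?_, ?_, ?_⟩
  · -- hS
    intro A hA
    rcases List.mem_append.mp hA with h | h
    · exact r.hS A h
    · exact q.hS A (List.mem_of_mem_drop h)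
  · -- hchain
    refine List.isChain_append.mpr ?_
    refine ⟨r.hchain, q.hchain.drop j, ?_⟩
    intro x hx y hy
    have hxr : x ∈ r.M := List.mem_of_mem_getLast? hx
    have hyN : y = N := by
      rw [List.head?_drop, List.getElem?_eq_getElem hj] at hy
      simp at hy; rw [← hy, hjN]
    rw [hyN]; exact hrN x hxr
  · -- hfin
    intro A hA
    by_cases h : A ∈ r.M
    · simp only [if_pos h]; exact r.hfin A h
    · simp only [if_neg h]
      rcases List.mem_append.mp hA with h' | h'
      · exact absurd h' h
      · exact q.hfin A (List.mem_of_mem_drop h')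
  · -- hnext
    intro i h
    simp only [List.get_eq_getElem]
    have hlent : (r.M ++ q.M.drop j).length = m + (q.M.length - j) := by
      simp [List.length_append, List.length_drop, hm]
    have h' : i + 1 < m + (q.M.length - j) := hlent ▸ h
    rcases lt_trichotomy (i + 1) m with hc | hc | hc
    · -- both in r.M
      have hi : i < m := by omega
      rw [List.getElem_append_left hi, List.getElem_append_left hc]
      have hAr : r.M[i] ∈ r.M := List.getElem_mem _
      simp only [if_pos hAr]
      have := r.hnext i hc
      simpa [List.get_eq_getElem] using this
    · -- boundary
      have hi : i < m := by omega
      rw [List.getElem_append_left hi,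
        List.getElem_append_right (by omega : m ≤ i + 1), List.getElem_drop]
      have hAr : r.M[i] ∈ r.M := List.getElem_mem _
      simp only [if_pos hAr]
      have hidx : j + (i + 1 - m) = j := by omega
      simp only [← hm, hidx, hjN]
      exact hrvN _ hAr
    · -- both in drop
      have hi : m ≤ i := by omega
      rw [List.getElem_append_right hi, List.getElem_append_right (by omega : m ≤ i + 1),
        List.getElem_drop, List.getElem_drop]
      have hlen2 : (j + (i - m)) + 1 < q.M.length := by omega
      have hnot : q.M[j + (i - m)]'(by omega) ∉ r.M := by
        intro hcon
        exact hmem_ge (j + (i - m)) (by omega) (by omega) (hrN _ hcon)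
      simp only [← hm, if_neg hnot]
      have hidx : j + (i + 1 - m) = (j + (i - m)) + 1 := by omega
      simp only [hidx]
      have := q.hnext (j + (i - m)) hlen2
      simpa [List.get_eq_getElem] using this
  · -- membership iff
    intro A
    constructor
    · intro hA
      rcases List.mem_append.mp hA with h | h
      · exact Or.inl h
      · exact Or.inr (List.mem_of_mem_drop h)
    · intro hA
      rcases hA with h | h
      · exact List.mem_append.mpr (Or.inl h)
      · by_cases hAr : A ∈ r.M
        · exact List.mem_append.mpr (Or.inl hAr)
        · obtain ⟨k, hk, hAk⟩ := List.getElem_of_mem h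
          have hjk : j ≤ k := by
            by_contra hcon
            exact hAr (hrq A h (hAk ▸ hmem_lt k (by omega)))
          refine List.mem_append.mpr (Or.inr ?_)
          have hk2 : k - j < (q.M.drop j).length := by rw [List.length_drop]; omega
          have : (q.M.drop j)[k - j] = A := by
            rw [List.getElem_drop]
            have : j + (k - j) = k := by omega
            simp_rw [this]; exact hAk
          exact this ▸ List.getElem_mem hk2
  · -- f on r.M
    intro A hA; simp only [if_pos hA]
  · -- f on q.M \ r.M
    intro A hA hAr; simp only [if_neg hAr]
  · -- Le r
    refine ⟨fun A hA => List.mem_append.mpr (Or.inl hA), fun A hA => ?_⟩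
    simp only [if_pos hA]
    exact subset_rfl
  · -- Le q
    constructor
    · intro A hA
      by_cases hAr : A ∈ r.M
      · exact List.mem_append.mpr (Or.inl hAr)
      · obtain ⟨k, hk, hAk⟩ := List.getElem_of_mem hA
        have hjk : j ≤ k := by
          by_contra hcon
          exact hAr (hrq A hA (hAk ▸ hmem_lt k (by omega)))
        refine List.mem_append.mpr (Or.inr ?_)
        have hk2 : k - j < (q.M.drop j).length := by rw [List.length_drop]; omega
        have : (q.M.drop j)[k - j] = A := by
          rw [List.getElem_drop]
          have : j + (k - j) = k := by omega
          simp_rw [this]; exact hAk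
        exact this ▸ List.getElem_mem hk2
    · intro A hA
      by_cases hAr : A ∈ r.M
      · simp only [if_pos hAr]
        exact hrqf A hA (hrN A hAr)
      · simp only [if_neg hAr]
        exact subset_rfl
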